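/- Let μ be a finite measure on ℝ and S ⊂ ℝ with μ the Lebesgue measure restricted to S = ⋃_{k≥1} I_k, where I_k = (1/k − ℓ_k/4, 1/k + ℓ_k/4) and ℓ_k = 1/k!. Let w be a weight with w ≥ 1 and w constant on each I_k, with w = (k−2)! on I_k (for k ≥ 3). Then w ∈ L¹(μ), but for every ε > 0, w^{1+ε} ∉ L¹(μ). -/

import Mathlib

open MeasureTheory Set

noncomputable section

/-- The interval I_k = (1/k − ℓ_k/4, 1/k + ℓ_k/4) with ℓ_k = 1/k!. -/
def Ik (k : ℕ) : Set ℝ :=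
  Set.Ioo ((k : ℝ)⁻¹ - 1 / (4 * (Nat.factorial k : ℝ)))
    ((k : ℝ)⁻¹ + 1 / (4 * (Nat.factorial k : ℝ)))

lemma fact_lb {i : ℕ} (hi : 3 ≤ i) : i * (i + 1) ≤ 2 * Nat.factorial i := by
  obtain ⟨m, rfl⟩ := Nat.exists_eq_add_of_le hi
  have h1 : 1 ≤ Nat.factorial m := Nat.factorial_pos m
  have key : (3 + m) * (3 + m + 1) ≤ 2 * ((m+3) * ((m+2) * ((m+1) * 1))) := by nlinarith [Nat.zero_le (m*m*m), Nat.zero_le (m*m)]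
  calc (3 + m) * (3 + m + 1) ≤ 2 * ((m+3) * ((m+2) * ((m+1) * 1))) := key
    _ ≤ 2 * ((m+3) * ((m+2) * ((m+1) * Nat.factorial m))) := by gcongr
    _ = 2 * Nat.factorial (3 + m) := by
        rw [Nat.add_comm 3 m]
        simp [Nat.factorial_succ]

lemma Ik_disjoint {i j : ℕ} (hi : 3 ≤ i) (hij : i < j) : Disjoint (Ik i) (Ik j) := by
  have hi0 : (0:ℝ) < i := by positivity
  have hj0 : (0:ℝ) < j := by
    have : (0:ℕ) < j := by omega
    exact_mod_cast this
  have hfi : (0:ℝ) < (Nat.factorial i : ℝ) := by exact_mod_cast Nat.factorial_pos i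
  have hfj : (0:ℝ) < (Nat.factorial j : ℝ) := by exact_mod_cast Nat.factorial_pos j
  have hij1 : (i:ℝ) + 1 ≤ j := by exact_mod_cast hij
  have hfij : (Nat.factorial i : ℝ) ≤ Nat.factorial j :=
    by exact_mod_cast Nat.factorial_le hij.le
  have h3 : (i:ℝ) * ((i:ℝ) + 1) ≤ 2 * (Nat.factorial i : ℝ) := by exact_mod_cast fact_lb hi
  -- key: sup (Ik j) ≤ inf (Ik i)
  have key : (j:ℝ)⁻¹ + 1 / (4 * (Nat.factorial j : ℝ))
      ≤ (i:ℝ)⁻¹ - 1 / (4 * (Nat.factorial i : ℝ)) := by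
    have e1 : (j:ℝ)⁻¹ ≤ ((i:ℝ) + 1)⁻¹ := by
      apply inv_anti₀ (by positivity) hij1
    have e2 : 1 / (4 * (Nat.factorial j : ℝ)) ≤ 1 / (4 * (Nat.factorial i : ℝ)) := by
      apply one_div_le_one_div_of_le (by positivity)
      linarith
    have e4 : (i:ℝ)⁻¹ - ((i:ℝ) + 1)⁻¹ = 1 / ((i:ℝ) * ((i:ℝ) + 1)) := by
      field_simp
      ring
    have e5 : 1 / (2 * (Nat.factorial i : ℝ)) ≤ 1 / ((i:ℝ) * ((i:ℝ) + 1)) :=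
      one_div_le_one_div_of_le (by positivity) h3
    have e6 : 1 / (4 * (Nat.factorial i : ℝ)) + 1 / (4 * (Nat.factorial i : ℝ))
        = 1 / (2 * (Nat.factorial i : ℝ)) := by field_simp; ring
    linarith
  rw [Set.disjoint_left]
  intro x hx1 hx2
  have := hx1.1
  have := hx2.2
  simp only [Ik, Set.mem_Ioo] at hx1 hx2
  linarith [hx1.1, hx2.2, key]

lemma fact_rpow {ε : ℝ} (hε : 0 < ε) (n m : ℕ) (hnε : 3 ≤ (n:ℝ) * ε) (hm : n + 7 ≤ m) :
    2 * (Nat.factorial (m + n + 2) : ℝ) ≤ (Nat.factorial (m + n) : ℝ) ^ (1 + ε) := by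
  have hA1 : (1:ℝ) ≤ (Nat.factorial (m + n) : ℝ) := by
    have := Nat.factorial_pos (m + n); exact_mod_cast this
  have hn0 : (0:ℝ) ≤ n := Nat.cast_nonneg n
  have hm0 : (0:ℝ) ≤ m := Nat.cast_nonneg m
  have hb1 : (1:ℝ) ≤ (m:ℝ) + 1 := by linarith
  set A : ℝ := (Nat.factorial (m + n) : ℝ) with hA
  have hb : ((m:ℝ) + 1) ^ n ≤ A := by
    rw [hA]
    have h1 : (m + 1) ^ n ≤ Nat.factorial m * (m + 1) ^ n :=
      Nat.le_mul_of_pos_left _ (Nat.factorial_pos m)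
    have h2 := Nat.factorial_mul_pow_le_factorial (m := m) (n := n)
    exact_mod_cast h1.trans h2
  have step1 : ((m:ℝ) + 1) ^ ((n:ℝ) * ε) ≤ A ^ ε := by
    have h := Real.rpow_le_rpow (by positivity) hb hε.le
    rwa [← Real.rpow_natCast ((m:ℝ) + 1) n, ← Real.rpow_mul (by positivity)] at h
  have step2 : ((m:ℝ) + 1) ^ (3:ℝ) ≤ ((m:ℝ) + 1) ^ ((n:ℝ) * ε) :=
    Real.rpow_le_rpow_of_exponent_le hb1 hnε
  have step3 : ((m:ℝ) + 1) ^ (3:ℝ) = ((m:ℝ) + 1) ^ (3:ℕ) := by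
    rw [← Real.rpow_natCast ((m:ℝ) + 1) 3]; norm_num
  have hm7 : (n:ℝ) + 7 ≤ m := by exact_mod_cast hm
  have hpoly : 2 * ((m:ℝ) + n + 2) * ((m:ℝ) + n + 1) ≤ ((m:ℝ) + 1) ^ (3:ℕ) := by
    nlinarith [sq_nonneg ((m:ℝ) - n), sq_nonneg ((m:ℝ) + 1)]
  have hAe : 2 * ((m:ℝ) + n + 2) * ((m:ℝ) + n + 1) ≤ A ^ ε :=
    hpoly.trans ((step3 ▸ step2).trans step1)
  have hfact : (Nat.factorial (m + n + 2) : ℝ) = ((m:ℝ) + n + 2) * (((m:ℝ) + n + 1) * A) := by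
    push_cast [Nat.factorial_succ]; ring
  have hrw : A ^ (1 + ε) = A * A ^ ε := by
    rw [Real.rpow_add (lt_of_lt_of_le one_pos hA1), Real.rpow_one]
  rw [hfact, hrw]
  calc 2 * (((m:ℝ) + n + 2) * (((m:ℝ) + n + 1) * A))
      = (2 * ((m:ℝ) + n + 2) * ((m:ℝ) + n + 1)) * A := by ring
    _ ≤ A ^ ε * A := mul_le_mul_of_nonneg_right hAe (by linarith)
    _ = A * A ^ ε := by ring

lemma Ik_measurableSet (k : ℕ) : MeasurableSet (Ik k) := measurableSet_Ioo

lemma lint_Ik (g : ℝ → ℝ) (c : ℝ) (hc : 0 ≤ c) (k : ℕ) (h : ∀ x ∈ Ik k, g x = c) :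
    ∫⁻ x in Ik k, ENNReal.ofReal (g x) = ENNReal.ofReal (c / (2 * (Nat.factorial k : ℝ))) := by
  have hvol : volume (Ik k) = ENNReal.ofReal (1 / (2 * (Nat.factorial k : ℝ))) := by
    have hf : (0:ℝ) < (Nat.factorial k : ℝ) := by exact_mod_cast Nat.factorial_pos k
    rw [Ik, Real.volume_Ioo]
    congr 1
    field_simp
    ring
  rw [setLIntegral_congr_fun (f := fun x => ENNReal.ofReal (g x))
      (g := fun _ => ENNReal.ofReal c) (Ik_measurableSet k)
      (fun x hx => by simp only [h x hx]),
    setLIntegral_const, hvol, ← ENNReal.ofReal_mul hc]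
  congr 1
  ring

theorem stmt12 (w : ℝ → ℝ) (hm : Measurable w) (hw1 : ∀ x, 1 ≤ w x)
    (hw12 : ∀ x ∈ Ik 1 ∪ Ik 2, w x = 1)
    (hw : ∀ k, 3 ≤ k → ∀ x ∈ Ik k, w x = (Nat.factorial (k - 2) : ℝ)) :
    Integrable w (volume.restrict (⋃ k ∈ Set.Ici 1, Ik k)) ∧
      ∀ ε : ℝ, 0 < ε →
        ¬ Integrable (fun x => w x ^ (1 + ε))
            (volume.restrict (⋃ k ∈ Set.Ici 1, Ik k)) := by
  have hw0 : ∀ x, 0 ≤ w x := fun x => le_trans zero_le_one (hw1 x)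
  constructor
  · refine ⟨hm.aestronglyMeasurable, ?_⟩
    rw [hasFiniteIntegral_iff_ofReal (Filter.Eventually.of_forall hw0)]
    have hsub : (⋃ k ∈ Set.Ici 1, Ik k) ⊆ ⋃ j : ℕ, Ik (j + 1) := by
      refine Set.iUnion₂_subset fun k hk => ?_
      have hk1 : 1 ≤ k := hk
      exact Set.subset_iUnion_of_subset (k - 1) (by rw [Nat.sub_add_cancel hk1])
    have bound : ∀ j : ℕ, ∫⁻ x in Ik (j + 1), ENNReal.ofReal (w x)
        ≤ ENNReal.ofReal (1 / ((j:ℝ) + 1) ^ 2) := by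
      intro j
      match j with
      | 0 =>
        rw [lint_Ik w 1 zero_le_one 1 (fun x hx => hw12 x (Or.inl hx))]
        apply ENNReal.ofReal_le_ofReal
        norm_num [Nat.factorial]
      | 1 =>
        rw [lint_Ik w 1 zero_le_one 2 (fun x hx => hw12 x (Or.inr hx))]
        apply ENNReal.ofReal_le_ofReal
        norm_num [Nat.factorial]
      | (m + 2) =>
        have h3 : 3 ≤ m + 3 := by omega
        have hval : ∀ x ∈ Ik (m + 3), w x = (Nat.factorial (m + 1) : ℝ) := by
          intro x hx
          rw [hw (m + 3) h3 x hx]; rfl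
        rw [show m + 2 + 1 = m + 3 from rfl,
          lint_Ik w (Nat.factorial (m + 1) : ℝ) (by positivity) (m + 3) hval]
        apply ENNReal.ofReal_le_ofReal
        have hf1 : (0:ℝ) < (Nat.factorial (m + 1) : ℝ) := by
          exact_mod_cast Nat.factorial_pos (m + 1)
        have hfact : (Nat.factorial (m + 3) : ℝ)
            = ((m:ℝ) + 3) * (((m:ℝ) + 2) * (Nat.factorial (m + 1) : ℝ)) := by
          push_cast [Nat.factorial_succ]; ring
        have hm0 : (0:ℝ) ≤ m := Nat.cast_nonneg m
        rw [div_le_div_iff₀ (by positivity) (by positivity), hfact]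
        push_cast
        nlinarith [hf1, hm0]
    calc ∫⁻ x in ⋃ k ∈ Set.Ici 1, Ik k, ENNReal.ofReal (w x)
        ≤ ∫⁻ x in ⋃ j : ℕ, Ik (j + 1), ENNReal.ofReal (w x) := lintegral_mono_set hsub
      _ ≤ ∑' j : ℕ, ∫⁻ x in Ik (j + 1), ENNReal.ofReal (w x) := lintegral_iUnion_le _ _
      _ ≤ ∑' j : ℕ, ENNReal.ofReal (1 / ((j:ℝ) + 1) ^ 2) := ENNReal.tsum_le_tsum bound
      _ = ENNReal.ofReal (∑' j : ℕ, 1 / ((j:ℝ) + 1) ^ 2) := by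
          have hsum : Summable (fun j : ℕ => 1 / ((j:ℝ) + 1) ^ 2) := by
            have h := (summable_nat_add_iff 1).2
              (Real.summable_one_div_nat_pow.2 one_lt_two)
            exact h.congr fun j => by push_cast; ring
          rw [ENNReal.ofReal_tsum_of_nonneg (fun j => by positivity) hsum]
      _ < ⊤ := ENNReal.ofReal_lt_top
  · intro ε hε hint
    have hfin : ∫⁻ x in ⋃ k ∈ Set.Ici 1, Ik k, ENNReal.ofReal (w x ^ (1 + ε)) < ⊤ := by
      have h2 := hint.2
      rwa [hasFiniteIntegral_iff_ofReal
        (Filter.Eventually.of_forall fun x => Real.rpow_nonneg (hw0 x) _)] at h2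
    set n : ℕ := ⌈3 / ε⌉₊ with hn
    have hnε : 3 ≤ (n:ℝ) * ε := by
      have h1 : 3 / ε ≤ (n:ℕ) := Nat.le_ceil _
      calc (3:ℝ) = 3 / ε * ε := by field_simp
        _ ≤ (n:ℝ) * ε := by apply mul_le_mul_of_nonneg_right h1 hε.le
    set s : ℕ → Set ℝ := fun j => Ik ((n + 14 + j) + n + 2) with hs
    have hdisj : Pairwise (Function.onFun Disjoint s) := by
      intro i j hij
      rcases hij.lt_or_gt with h | h
      · exact Ik_disjoint (by omega) (by omega)
      · exact (Ik_disjoint (by omega) (by omega)).symm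
    have hmeas : ∀ j, MeasurableSet (s j) := fun j => measurableSet_Ioo
    have hone : ∀ j : ℕ, (1:ENNReal) ≤ ∫⁻ x in s j, ENNReal.ofReal (w x ^ (1 + ε)) := by
      intro j
      set m : ℕ := n + 14 + j with hmj
      have hval : ∀ x ∈ Ik (m + n + 2),
          (fun x => w x ^ (1 + ε)) x = ((Nat.factorial (m + n) : ℝ)) ^ (1 + ε) := by
        intro x hx
        have h3 : 3 ≤ m + n + 2 := by omega
        have heq2 : m + n + 2 - 2 = m + n := by omega
        show w x ^ (1 + ε) = _
        rw [hw (m + n + 2) h3 x hx, heq2]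
      have hA0 : (0:ℝ) < (Nat.factorial (m + n) : ℝ) := by
        exact_mod_cast Nat.factorial_pos (m + n)
      rw [hs, lint_Ik _ _ (by positivity) (m + n + 2) hval]
      rw [← ENNReal.ofReal_one]
      apply ENNReal.ofReal_le_ofReal
      have hK : 2 * (Nat.factorial (m + n + 2) : ℝ)
          ≤ (Nat.factorial (m + n) : ℝ) ^ (1 + ε) := fact_rpow hε n m hnε (by omega)
      have hf2 : (0:ℝ) < (Nat.factorial (m + n + 2) : ℝ) := by
        exact_mod_cast Nat.factorial_pos (m + n + 2)
      rw [le_div_iff₀ (by positivity)]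
      linarith
    have hTsub : (⋃ j : ℕ, s j) ⊆ ⋃ k ∈ Set.Ici 1, Ik k := by
      refine Set.iUnion_subset fun j => ?_
      exact Set.subset_biUnion_of_mem (u := Ik)
        (Set.mem_Ici.mpr (by omega : 1 ≤ (n + 14 + j) + n + 2))
    have htop : (⊤:ENNReal) ≤ ∫⁻ x in ⋃ k ∈ Set.Ici 1, Ik k, ENNReal.ofReal (w x ^ (1 + ε)) := by
      calc (⊤:ENNReal) = ∑' _ : ℕ, (1:ENNReal) :=
            (ENNReal.tsum_const_eq_top_of_ne_zero one_ne_zero).symm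
        _ ≤ ∑' j : ℕ, ∫⁻ x in s j, ENNReal.ofReal (w x ^ (1 + ε)) := ENNReal.tsum_le_tsum hone
        _ = ∫⁻ x in ⋃ j : ℕ, s j, ENNReal.ofReal (w x ^ (1 + ε)) :=
            (lintegral_iUnion hmeas hdisj _).symm
        _ ≤ _ := lintegral_mono_set hTsub
    exact absurd (top_le_iff.mp htop ▸ hfin) (lt_irrefl ⊤)
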